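/- Let s be a binary sequence of length ℓ ≥ 1, let e_0 = 0^ℓ be the all-zeros sequence of length ℓ, and for i ∈ [ℓ] let e_i = 0^{i-1} 1 0^{ℓ-i}. Then s[i] = 1 if and only if d_L(s, e_0) - d_L(s, e_i) = 1, and s[i] = 0 if and only if d_L(s, e_0) - d_L(s, e_i) ≤ 0. -/

import Mathlib

namespace Levenshtein

/-- Costs of the edit operations (as in the former `Mathlib.Data.List.EditDistance.Defs`). -/
structure Cost (α β δ : Type*) where
  delete : α → δ
  insert : β → δ
  substitute : α → β → δ

/-- The default unit costs (as in the former Mathlib). -/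
def defaultCost {α : Type*} [DecidableEq α] : Cost α α ℕ where
  delete _ := 1
  insert _ := 1
  substitute a b := if a = b then 0 else 1

end Levenshtein

/-- The Levenshtein distance, by the recursion the former Mathlib `levenshtein` satisfies
(`levenshtein_nil_nil`, `levenshtein_nil_cons`, `levenshtein_cons_nil`, `levenshtein_cons_cons`). -/
def levenshtein {α β δ : Type*} [AddZeroClass δ] [Min δ] (C : Levenshtein.Cost α β δ) :
    List α → List β → δ
  | [], [] => 0
  | [], y :: ys => C.insert y + levenshtein C [] ys
  | x :: xs, [] => C.delete x + levenshtein C xs []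
  | x :: xs, y :: ys =>
    min (C.delete x + levenshtein C xs (y :: ys))
      (min (C.insert y + levenshtein C (x :: xs) ys) (C.substitute x y + levenshtein C xs ys))

/-- The Levenshtein edit distance with unit costs, over alphabet `ℕ`. -/
def editDist (x y : List ℕ) : ℕ := levenshtein Levenshtein.defaultCost x y

lemma editDist_cons_cons (x y : ℕ) (xs ys : List ℕ) :
    editDist (x :: xs) (y :: ys) =
      min (1 + editDist xs (y :: ys))
        (min (1 + editDist (x :: xs) ys) ((if x = y then 0 else 1) + editDist xs ys)) := by
  simp [editDist, levenshtein, Levenshtein.defaultCost]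

lemma editDist_nil_left (y : List ℕ) : editDist [] y = y.length := by
  induction y with
  | nil => simp [editDist, levenshtein]
  | cons a l ih => simp [editDist, levenshtein, Levenshtein.defaultCost] at ih ⊢; omega

lemma editDist_nil_right (x : List ℕ) : editDist x [] = x.length := by
  induction x with
  | nil => simp [editDist, levenshtein]
  | cons a l ih => simp [editDist, levenshtein, Levenshtein.defaultCost] at ih ⊢; omega

lemma min3_facts (x y z : ℕ) :
    (min x (min y z) = x ∨ min x (min y z) = y ∨ min x (min y z) = z) ∧
      min x (min y z) ≤ x ∧ min x (min y z) ≤ y ∧ min x (min y z) ≤ z := by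
  have h1 := min_le_left x (min y z)
  have h2 := min_le_right x (min y z)
  have h3 := min_le_left y z
  have h4 := min_le_right y z
  have h5 := min_choice x (min y z)
  have h6 := min_choice y z
  refine ⟨?_, ?_, ?_, ?_⟩ <;> omega

/-- Each unit edit changes the number of 1s by at most one. -/
lemma count_le_editDist (x : List ℕ) : ∀ y : List ℕ,
    x.count 1 ≤ editDist x y + y.count 1 := by
  induction x with
  | nil => intro y; simp
  | cons p xs ihx =>
    intro y
    induction y with
    | nil =>
      rw [editDist_nil_right]
      have := List.count_le_length (l := p :: xs) (a := 1)
      omega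
    | cons q ys ihy =>
      rw [editDist_cons_cons]
      have h1 := ihx (q :: ys)
      have h3 := ihx ys
      obtain ⟨hch, -, -, -⟩ := min3_facts (1 + editDist xs (q :: ys))
        (1 + editDist (p :: xs) ys) ((if p = q then 0 else 1) + editDist xs ys)
      simp only [List.count_cons, beq_iff_eq] at *
      rcases hch with h | h | h <;> rw [h] <;> clear h <;> split_ifs at * <;> omega

/-- Closed form for distance to an all-zeros string. -/
lemma editDist_replicate_zero (s : List ℕ) (hbin : ∀ c ∈ s, c = 0 ∨ c = 1) :
    ∀ k, editDist s (List.replicate k 0) =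
      max (s.count 1) (s.length - k) + (k - s.length) := by
  induction s with
  | nil => intro k; simp [editDist_nil_left]
  | cons c t iht =>
    have hbt : ∀ x ∈ t, x = 0 ∨ x = 1 := fun x hx => hbin x (List.mem_cons_of_mem _ hx)
    have hc := hbin c (List.mem_cons_self)
    intro k
    induction k with
    | zero =>
      rw [List.replicate_zero, editDist_nil_right]
      have := List.count_le_length (l := c :: t) (a := 1)
      omega
    | succ k ihk =>
      rw [List.replicate_succ, editDist_cons_cons]
      have h1 := iht hbt (k + 1)
      rw [List.replicate_succ] at h1
      have h3 := iht hbt k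
      have hct := List.count_le_length (l := t) (a := 1)
      obtain ⟨hch, hl1, hl2, hl3⟩ := min3_facts (1 + editDist t (0 :: List.replicate k 0))
        (1 + editDist (c :: t) (List.replicate k 0))
        ((if c = 0 then 0 else 1) + editDist t (List.replicate k 0))
      simp only [List.count_cons, List.length_cons, beq_iff_eq] at *
      rcases hch with h | h | h <;> rw [h] at hl1 hl2 hl3 ⊢ <;> clear h <;>
        rcases hc with hc | hc <;> subst hc <;>
        split_ifs at * <;> omega

lemma count_target (a b : ℕ) :
    (List.replicate a 0 ++ 1 :: List.replicate b 0).count 1 = 1 := by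
  simp [List.count_append, List.count_cons, List.count_replicate]

/-- Upper bound: if `s = u ++ 1 :: v`, substitutions alone give cost `count u + count v`. -/
lemma editDist_upper (u v : List ℕ) (hu : ∀ c ∈ u, c = 0 ∨ c = 1)
    (hv : ∀ c ∈ v, c = 0 ∨ c = 1) :
    editDist (u ++ 1 :: v) (List.replicate u.length 0 ++ 1 :: List.replicate v.length 0) ≤
      u.count 1 + v.count 1 := by
  induction u with
  | nil =>
    simp only [List.nil_append, List.length_nil, List.replicate_zero, List.count_nil]
    rw [editDist_cons_cons]
    refine le_trans (le_trans (min_le_right _ _) (min_le_right _ _)) ?_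
    have h := editDist_replicate_zero v hv v.length
    have hct := List.count_le_length (l := v) (a := 1)
    simp only [reduceIte]
    omega
  | cons c u ihu =>
    rw [List.cons_append, List.length_cons, List.replicate_succ, List.cons_append,
      editDist_cons_cons]
    refine le_trans (le_trans (min_le_right _ _) (min_le_right _ _)) ?_
    have h := ihu (fun x hx => hu x (List.mem_cons_of_mem _ hx))
    have hc := hu c (List.mem_cons_self)
    rcases hc with hc | hc <;> subst hc <;>
      simp only [List.count_cons, beq_iff_eq] <;> norm_num <;> omega

/-- Lower bound: unless `s` decomposes as `u ++ 1 :: v` compatibly with `(a, b)`,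
the distance to `0^a 1 0^b` is at least the number of ones of `s`. -/
lemma editDist_lower (s : List ℕ) (hbin : ∀ c ∈ s, c = 0 ∨ c = 1) : ∀ a b : ℕ,
    (¬ ∃ u v : List ℕ, s = u ++ 1 :: v ∧ u.length - u.count 1 ≤ a ∧ a ≤ u.length ∧
        v.length - v.count 1 ≤ b ∧ b ≤ v.length) →
    s.count 1 ≤ editDist s (List.replicate a 0 ++ 1 :: List.replicate b 0) := by
  induction s with
  | nil => intro a b _; simp
  | cons c t iht =>
    have hbt : ∀ x ∈ t, x = 0 ∨ x = 1 := fun x hx => hbin x (List.mem_cons_of_mem _ hx)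
    have hc := hbin c (List.mem_cons_self)
    have hct := List.count_le_length (l := t) (a := 1)
    intro a b hng
    match a with
    | 0 =>
      simp only [List.replicate_zero, List.nil_append]
      rw [editDist_cons_cons]
      refine le_min ?_ (le_min ?_ ?_)
      · -- delete c
        rcases hc with hc | hc <;> subst hc
        · have h := count_le_editDist t (1 :: List.replicate b 0)
          simp only [List.count_cons, List.count_replicate, beq_iff_eq] at h ⊢
          norm_num at h ⊢
          omega
        · have hng' : ¬ ∃ u v : List ℕ, t = u ++ 1 :: v ∧ u.length - u.count 1 ≤ 0 ∧
              0 ≤ u.length ∧ v.length - v.count 1 ≤ b ∧ b ≤ v.length := by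
            rintro ⟨u, v, rfl, hu1, hu2, hv1, hv2⟩
            refine hng ⟨1 :: u, v, rfl, ?_, ?_, hv1, hv2⟩ <;>
              have hcu := List.count_le_length (l := u) (a := 1) <;>
              simp only [List.length_cons, List.count_cons, beq_iff_eq] <;> norm_num <;> omega
          have h := iht hbt 0 b hng'
          simp only [List.replicate_zero, List.nil_append] at h
          simp only [List.count_cons, beq_iff_eq]
          norm_num
          omega
      · -- insert 1
        have h := count_le_editDist (c :: t) (List.replicate b 0)
        simp only [List.count_replicate] at h
        norm_num at h
        omega
      · -- substitute c/1
        rcases hc with hc | hc <;> subst hc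
        · have h := count_le_editDist t (List.replicate b 0)
          simp only [List.count_replicate] at h
          simp only [List.count_cons, beq_iff_eq]
          norm_num at h ⊢
          omega
        · have hnb : ¬ (t.length - t.count 1 ≤ b ∧ b ≤ t.length) := by
            rintro ⟨h1', h2'⟩
            exact hng ⟨[], t, rfl, by simp, by simp, h1', h2'⟩
          have h := editDist_replicate_zero t hbt b
          simp only [List.count_cons, beq_iff_eq]
          norm_num
          omega
    | j + 1 =>
      rw [List.replicate_succ, List.cons_append, editDist_cons_cons]
      have hcnt1 := count_target (j + 1) b
      rw [List.replicate_succ, List.cons_append] at hcnt1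
      have hcnt2 := count_target j b
      refine le_min ?_ (le_min ?_ ?_)
      · -- delete c
        rcases hc with hc | hc <;> subst hc
        · have h := count_le_editDist t (0 :: (List.replicate j 0 ++ 1 :: List.replicate b 0))
          rw [hcnt1] at h
          simp only [List.count_cons, beq_iff_eq]
          norm_num
          omega
        · have hng' : ¬ ∃ u v : List ℕ, t = u ++ 1 :: v ∧ u.length - u.count 1 ≤ j + 1 ∧
              j + 1 ≤ u.length ∧ v.length - v.count 1 ≤ b ∧ b ≤ v.length := by
            rintro ⟨u, v, rfl, hu1, hu2, hv1, hv2⟩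
            refine hng ⟨1 :: u, v, rfl, ?_, ?_, hv1, hv2⟩ <;>
              have hcu := List.count_le_length (l := u) (a := 1) <;>
              simp only [List.length_cons, List.count_cons, beq_iff_eq] <;> norm_num <;> omega
          have h := iht hbt (j + 1) b hng'
          rw [List.replicate_succ, List.cons_append] at h
          simp only [List.count_cons, beq_iff_eq]
          norm_num
          omega
      · -- insert 0
        have h := count_le_editDist (c :: t) (List.replicate j 0 ++ 1 :: List.replicate b 0)
        rw [hcnt2] at h
        omega
      · -- substitute c/0
        have hng' : ¬ ∃ u v : List ℕ, t = u ++ 1 :: v ∧ u.length - u.count 1 ≤ j ∧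
            j ≤ u.length ∧ v.length - v.count 1 ≤ b ∧ b ≤ v.length := by
          rintro ⟨u, v, rfl, hu1, hu2, hv1, hv2⟩
          have hcu := List.count_le_length (l := u) (a := 1)
          refine hng ⟨c :: u, v, rfl, ?_, ?_, hv1, hv2⟩ <;>
            simp only [List.length_cons, List.count_cons, beq_iff_eq] <;>
            (try split_ifs) <;> omega
        have h := iht hbt j b hng'
        rcases hc with hc | hc <;> subst hc <;>
          simp only [List.count_cons, beq_iff_eq] <;> norm_num <;> omega

/-- For a binary sequence `s` of length `ℓ ≥ 1`, with `e₀ = 0^ℓ` and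
`e i = 0^(i-1) 1 0^(ℓ-i)` for `i ∈ [ℓ]` (1-indexed), the i-th character of `s` is `1`
iff `d_L(s,e₀) - d_L(s,e i) = 1`, and it is `0` iff `d_L(s,e₀) - d_L(s,e i) ≤ 0`. -/
theorem edit_unit_vector_queries_recover_characters
    (ℓ : ℕ) (hℓ : 1 ≤ ℓ) (s : List ℕ) (hlen : s.length = ℓ)
    (hbin : ∀ c ∈ s, c = 0 ∨ c = 1)
    (i : ℕ) (hi1 : 1 ≤ i) (hiℓ : i ≤ ℓ) :
    let e0 : List ℕ := List.replicate ℓ 0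
    let ei : List ℕ := List.replicate (i - 1) 0 ++ [1] ++ List.replicate (ℓ - i) 0
    (s.getD (i - 1) 0 = 1 ↔
      (editDist s e0 : ℤ) - (editDist s ei : ℤ) = 1) ∧
    (s.getD (i - 1) 0 = 0 ↔
      (editDist s e0 : ℤ) - (editDist s ei : ℤ) ≤ 0) := by
  intro e0 ei
  have hei : ei = List.replicate (i - 1) 0 ++ 1 :: List.replicate (ℓ - i) 0 := by
    simp [ei, List.append_assoc]
  have he0 : e0 = List.replicate ℓ 0 := rfl
  clear_value e0 ei
  have hidx : i - 1 < s.length := by omega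
  have hE0 : editDist s e0 = s.count 1 := by
    have h := editDist_replicate_zero s hbin ℓ
    have hct := List.count_le_length (l := s) (a := 1)
    rw [he0, h]
    omega
  have hgetD : s.getD (i - 1) 0 = s[i - 1]'hidx := by
    rw [List.getD_eq_getElem?_getD, List.getElem?_eq_getElem hidx]
    rfl
  have hbv : s[i - 1]'hidx = 0 ∨ s[i - 1]'hidx = 1 := hbin _ (List.getElem_mem hidx)
  have hcntei : ei.count 1 = 1 := by rw [hei]; exact count_target _ _
  have hlow := count_le_editDist s ei
  rw [hcntei] at hlow
  rcases hbv with h0 | h1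
  · -- s[i-1] = 0 : distance at least count
    have hng : ¬ ∃ u v : List ℕ, s = u ++ 1 :: v ∧ u.length - u.count 1 ≤ i - 1 ∧
        i - 1 ≤ u.length ∧ v.length - v.count 1 ≤ ℓ - i ∧ ℓ - i ≤ v.length := by
      rintro ⟨u, v, hsv, hu1, hu2, hv1, hv2⟩
      have hlen' : s.length = u.length + 1 + v.length := by
        rw [hsv]; simp; omega
      have hau : i - 1 = u.length := by omega
      have : s[i - 1]'hidx = 1 := by
        subst hsv
        rw [List.getElem_append_right (by omega)]
        simp [hau]
      omega
    have hC := editDist_lower s hbin (i - 1) (ℓ - i) hng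
    rw [← hei] at hC
    rw [hgetD, h0]
    constructor
    · constructor
      · intro h; omega
      · intro h; exfalso; revert h; omega
    · constructor
      · intro _; omega
      · intro _; rfl
  · -- s[i-1] = 1 : distance exactly count - 1
    have hsv : s = s.take (i - 1) ++ 1 :: s.drop i := by
      conv_lhs => rw [← List.take_append_drop (i - 1) s]
      congr 1
      rw [List.drop_eq_getElem_cons hidx, h1, show i - 1 + 1 = i from by omega]
    have hulen : (s.take (i - 1)).length = i - 1 := by simp; omega
    have hvlen : (s.drop i).length = ℓ - i := by simp; omega
    have hub := editDist_upper (s.take (i - 1)) (s.drop i)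
      (fun x hx => hbin x (List.mem_of_mem_take hx))
      (fun x hx => hbin x (List.mem_of_mem_drop hx))
    rw [hulen, hvlen, ← hei, ← hsv] at hub
    have hcnt : s.count 1 = (s.take (i - 1)).count 1 + (s.drop i).count 1 + 1 := by
      conv_lhs => rw [hsv]
      simp [List.count_append, List.count_cons]
      ring
    rw [hgetD, h1]
    constructor
    · constructor
      · intro _; omega
      · intro _; rfl
    · constructor
      · intro h; omega
      · intro h; omega
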